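/- Let A be an n-dimensional naturally graded p-filiform non-unital associative algebra over ℂ (p ≥ 1, n − p ≥ 3) with natural grading (𝒜_i), and write s_i = dim 𝒜_i − 1 for 1 ≤ i ≤ n − p. If for some k with 1 ≤ k ≤ n − p − 1 one has s_1 + s_2 + ⋯ + s_k < p (equivalently, dim(𝒜_1 + 𝒜_2 + ⋯ + 𝒜_k) < k + p), then s_{k+1} ≠ 0, i.e. dim 𝒜_{k+1} ≥ 2. -/

import Mathlib

variable (A : Type*) [NonUnitalRing A] [Module ℂ A] [SMulCommClass ℂ A A] [IsScalarTower ℂ A A]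

/-- Product of two submodules of a non-unital algebra: the span of all pairwise
products. In particular `pmul A ⊤ ⊤` is `A²`, the span of all products `x·y`. -/
def pmul (I J : Submodule ℂ A) : Submodule ℂ A :=
  Submodule.span ℂ (Set.image2 (· * ·) (I : Set A) (J : Set A))

/-- The series of powers `A^1 = A`, `A^{i+1} = Σ_{k=1}^{i} A^k · A^{i+1-k}`.
(`algPow A 0` is junk, set to `⊤`.) -/
def algPow : ℕ → Submodule ℂ A
  | 0 => ⊤
  | 1 => ⊤
  | n + 2 => ⨆ k : Fin (n + 1), pmul A (algPow (k + 1)) (algPow (n + 1 - k))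
  termination_by n => n
  decreasing_by
  · omega
  · omega

/-- An algebra is nilpotent if some power `A^m` (`m ≥ 1`) vanishes. -/
def IsNilpotentAlg : Prop :=
  ∃ m : ℕ, 1 ≤ m ∧ algPow A m = ⊥

/-- A natural grading of `A`: a family of submodules `𝒜 1, 𝒜 2, …` (with `𝒜 0 = ⊥`)
such that `A` is their internal direct sum, `𝒜 i · 𝒜 j ⊆ 𝒜 (i+j)` and
`𝒜 (i+1) = 𝒜 1 · 𝒜 i`. -/
structure IsNaturalGrading (𝒜 : ℕ → Submodule ℂ A) : Prop where
  zero : 𝒜 0 = ⊥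
  internal : DirectSum.IsInternal 𝒜
  mul_le : ∀ i j, 1 ≤ i → 1 ≤ j → pmul A (𝒜 i) (𝒜 j) ≤ 𝒜 (i + j)
  succ : ∀ i, 1 ≤ i → 𝒜 (i + 1) = pmul A (𝒜 1) (𝒜 i)

/-- `x ∈ A ∖ A²` realizes the characteristic sequence `(n-p, 1, …, 1)`:
the left multiplication `L_x` satisfies `L_x^{n-p-1} ≠ 0` and `rank L_x = n-p-1`. -/
def RealizesCharSeq (n p : ℕ) (x : A) : Prop :=
  x ∉ pmul A ⊤ ⊤ ∧ (LinearMap.mulLeft ℂ x) ^ (n - p - 1) ≠ 0 ∧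
    Module.finrank ℂ (LinearMap.range (LinearMap.mulLeft ℂ x)) = n - p - 1

/-- `A` is `p`-filiform: `C(A) = (n-p, 1, …, 1)`, i.e. some `x ∈ A ∖ A²` realizes the
characteristic sequence, and for every `y ∈ A ∖ A²` one has `L_y^{n-p} = 0` and, if
`L_y^{n-p-1} ≠ 0`, then `rank L_y = n-p-1`. -/
def IsPFiliform (n p : ℕ) : Prop :=
  (∃ x : A, RealizesCharSeq A n p x) ∧
    ∀ y : A, y ∉ pmul A ⊤ ⊤ →
      (LinearMap.mulLeft ℂ y) ^ (n - p) = 0 ∧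
        ((LinearMap.mulLeft ℂ y) ^ (n - p - 1) ≠ 0 →
          Module.finrank ℂ (LinearMap.range (LinearMap.mulLeft ℂ y)) = n - p - 1)

/-- An adapted basis `{e_1,…,e_{n-p}, f_1,…,f_p}` of a `p`-filiform algebra:
a basis with `e_1` realizing the characteristic sequence, `e_1 e_i = e_{i+1}` for
`1 ≤ i ≤ n-p-1`, `e_1 e_{n-p} = 0`, and `e_1 f_j = 0` for `1 ≤ j ≤ p`. -/
structure IsAdaptedBasis (n p : ℕ) (e f : ℕ → A) : Prop where
  indep : LinearIndependent ℂ
    (Sum.elim (fun i : Fin (n - p) => e (i.1 + 1)) (fun j : Fin p => f (j.1 + 1)))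
  span : Submodule.span ℂ (Set.range
    (Sum.elim (fun i : Fin (n - p) => e (i.1 + 1)) (fun j : Fin p => f (j.1 + 1)))) = ⊤
  char : RealizesCharSeq A n p (e 1)
  mul_e : ∀ i, 1 ≤ i → i ≤ n - p - 1 → e 1 * e i = e (i + 1)
  mul_last : e 1 * e (n - p) = 0
  mul_f : ∀ j, 1 ≤ j → j ≤ p → e 1 * f j = 0

/-- `s_i = dim 𝒜_i − 1` (truncated subtraction). -/
noncomputable def sdim (𝒜 : ℕ → Submodule ℂ A) (i : ℕ) : ℕ :=
  Module.finrank ℂ (𝒜 i) - 1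

/-- `S k = s_1 + ⋯ + s_k` (with `S 0 = 0`). -/
noncomputable def sSum (𝒜 : ℕ → Submodule ℂ A) (k : ℕ) : ℕ :=
  ∑ j ∈ Finset.Icc 1 k, sdim A 𝒜 j

/-- A homogeneous adapted basis: an adapted basis with `e_i ∈ 𝒜_i` for
`1 ≤ i ≤ n-p` and `f_{s_1+⋯+s_{i-1}+1}, …, f_{s_1+⋯+s_i} ∈ 𝒜_i` for `1 ≤ i ≤ n-p`. -/
structure IsHomogAdaptedBasis (n p : ℕ) (𝒜 : ℕ → Submodule ℂ A) (e f : ℕ → A) : Prop where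
  adapted : IsAdaptedBasis A n p e f
  e_mem : ∀ i, 1 ≤ i → i ≤ n - p → e i ∈ 𝒜 i
  f_mem : ∀ i, 1 ≤ i → i ≤ n - p →
    ∀ t, sSum A 𝒜 (i - 1) < t → t ≤ sSum A 𝒜 i → f t ∈ 𝒜 i

/-! ### Auxiliary API for `pmul` -/

lemma mul_mem_pmul {I J : Submodule ℂ A} {x y : A} (hx : x ∈ I) (hy : y ∈ J) :
    x * y ∈ pmul A I J :=
  Submodule.subset_span (Set.mem_image2_of_mem hx hy)

lemma pmul_le {I J K : Submodule ℂ A} :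
    pmul A I J ≤ K ↔ ∀ x ∈ I, ∀ y ∈ J, x * y ∈ K := by
  rw [pmul, Submodule.span_le]
  constructor
  · intro h x hx y hy
    exact h (Set.mem_image2_of_mem hx hy)
  · rintro h - ⟨x, hx, y, hy, rfl⟩
    exact h x hx y hy

lemma pmul_bot_right (I : Submodule ℂ A) : pmul A I ⊥ = ⊥ := by
  refine le_bot_iff.mp ((pmul_le A).mpr ?_)
  rintro x - y hy
  rw [Submodule.mem_bot] at hy
  simp [hy]

lemma pmul_assoc (I J K : Submodule ℂ A) :
    pmul A (pmul A I J) K = pmul A I (pmul A J K) := by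
  apply le_antisymm
  · rw [pmul_le]
    intro q hq z hz
    induction hq using Submodule.span_induction with
    | mem w hw =>
      obtain ⟨x, hx, y, hy, rfl⟩ := hw
      rw [mul_assoc]
      exact mul_mem_pmul A hx (mul_mem_pmul A hy hz)
    | zero => rw [zero_mul]; exact zero_mem _
    | add a b _ _ ha hb => rw [add_mul]; exact add_mem ha hb
    | smul c a _ ha => rw [smul_mul_assoc]; exact Submodule.smul_mem _ c ha
  · rw [pmul_le]
    intro x hx q hq
    induction hq using Submodule.span_induction with
    | mem w hw =>
      obtain ⟨y, hy, z, hz, rfl⟩ := hw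
      rw [← mul_assoc]
      exact mul_mem_pmul A (mul_mem_pmul A hx hy) hz
    | zero => rw [mul_zero]; exact zero_mem _
    | add a b _ _ ha hb => rw [mul_add]; exact add_mem ha hb
    | smul c a _ ha => rw [mul_smul_comm]; exact Submodule.smul_mem _ c ha

lemma pmul_ne_bot {I J : Submodule ℂ A} (h : pmul A I J ≠ ⊥) :
    ∃ x ∈ I, ∃ y ∈ J, x * y ≠ 0 := by
  by_contra hc
  push_neg at hc
  exact h (le_bot_iff.mp ((pmul_le A).mpr fun x hx y hy => by
    rw [Submodule.mem_bot]; exact hc x hx y hy))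

/-! ### The filtration `B i = ⨆_{t ≥ i} 𝒜 t` -/

/-- The filtration associated to a grading. -/
def gradB (𝒜 : ℕ → Submodule ℂ A) (i : ℕ) : Submodule ℂ A :=
  ⨆ t : {t : ℕ // i ≤ t}, 𝒜 t.1

lemma le_gradB (𝒜 : ℕ → Submodule ℂ A) {i t : ℕ} (h : i ≤ t) : 𝒜 t ≤ gradB A 𝒜 i :=
  le_iSup (fun s : {t : ℕ // i ≤ t} => 𝒜 s.1) ⟨t, h⟩

lemma gradB_le_gradB (𝒜 : ℕ → Submodule ℂ A) {i j : ℕ} (h : i ≤ j) :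
    gradB A 𝒜 j ≤ gradB A 𝒜 i :=
  iSup_le fun t => le_gradB A 𝒜 (h.trans t.2)

section Grading

variable {𝒜 : ℕ → Submodule ℂ A}

lemma mem_gradB_one (hgr : IsNaturalGrading A 𝒜) (z : A) : z ∈ gradB A 𝒜 1 := by
  have htop : (⊤ : Submodule ℂ A) ≤ gradB A 𝒜 1 := by
    rw [← hgr.internal.submodule_iSup_eq_top]
    refine iSup_le fun t => ?_
    rcases Nat.eq_zero_or_pos t with rfl | ht
    · rw [hgr.zero]; exact bot_le
    · exact le_gradB A 𝒜 ht
  exact htop trivial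

lemma gradB_mul (hgr : IsNaturalGrading A 𝒜) {i j : ℕ} (hi : 1 ≤ i) (hj : 1 ≤ j) :
    ∀ a ∈ gradB A 𝒜 i, ∀ b ∈ gradB A 𝒜 j, a * b ∈ gradB A 𝒜 (i + j) := by
  intro a ha
  refine Submodule.iSup_induction _ (motive := fun a => ∀ b ∈ gradB A 𝒜 j, a * b ∈ gradB A 𝒜 (i + j)) ha ?_ ?_ ?_
  · rintro ⟨s, hs⟩ x hx b hb
    refine Submodule.iSup_induction _ (motive := fun b => x * b ∈ gradB A 𝒜 (i + j)) hb ?_ ?_ ?_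
    · rintro ⟨t, ht⟩ y hy
      have hx' : x * y ∈ 𝒜 (s + t) :=
        hgr.mul_le s t (hi.trans hs) (hj.trans ht) (mul_mem_pmul A hx hy)
      exact le_gradB A 𝒜 (Nat.add_le_add hs ht) hx'
    · show x * 0 ∈ gradB A 𝒜 (i + j)
      rw [mul_zero]; exact zero_mem _
    · intro y z hy hz
      show x * (y + z) ∈ gradB A 𝒜 (i + j)
      rw [mul_add]; exact add_mem hy hz
  · intro b hb
    show (0 : A) * b ∈ gradB A 𝒜 (i + j)
    rw [zero_mul]; exact zero_mem _
  · intro a₁ a₂ h1 h2 b hb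
    rw [add_mul]; exact add_mem (h1 b hb) (h2 b hb)

lemma gradB_disjoint (hgr : IsNaturalGrading A 𝒜) {s : ℕ} {z : A}
    (hz : z ∈ 𝒜 s) (hz' : z ∈ gradB A 𝒜 (s + 1)) : z = 0 := by
  have hind := hgr.internal.submodule_iSupIndep
  have hle : gradB A 𝒜 (s + 1) ≤ ⨆ (j) (_ : j ≠ s), 𝒜 j := by
    refine iSup_le fun t => ?_
    have : t.1 ≠ s := by have := t.2; omega
    exact le_iSup₂ (f := fun (j : ℕ) (_ : j ≠ s) => 𝒜 j) t.1 this
  exact Submodule.disjoint_def.mp (hind s) z hz (hle hz')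

lemma sq_le_gradB_two (hgr : IsNaturalGrading A 𝒜) : pmul A ⊤ ⊤ ≤ gradB A 𝒜 2 := by
  rw [pmul_le]
  intro x _ y _
  exact gradB_mul A hgr le_rfl le_rfl x (mem_gradB_one A hgr x) y (mem_gradB_one A hgr y)

lemma exists_decomp (hgr : IsNaturalGrading A 𝒜) (z : A) :
    ∃ z₁ ∈ 𝒜 1, ∃ z' ∈ gradB A 𝒜 2, z₁ + z' = z := by
  have : z ∈ 𝒜 1 ⊔ gradB A 𝒜 2 := by
    have htop : (⊤ : Submodule ℂ A) ≤ 𝒜 1 ⊔ gradB A 𝒜 2 := by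
      rw [← hgr.internal.submodule_iSup_eq_top]
      refine iSup_le fun t => ?_
      match t with
      | 0 => rw [hgr.zero]; exact bot_le
      | 1 => exact le_sup_left
      | (m + 2) => exact (le_gradB A 𝒜 (by omega)).trans le_sup_right
    exact htop trivial
  exact Submodule.mem_sup.mp this

lemma not_mem_sq (hgr : IsNaturalGrading A 𝒜) {v w : A} (hv : v ∈ 𝒜 1) (hv0 : v ≠ 0)
    (hw : w ∈ gradB A 𝒜 2) : v + w ∉ pmul A ⊤ ⊤ := by
  intro hmem
  have h2 : v + w ∈ gradB A 𝒜 2 := sq_le_gradB_two A hgr hmem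
  have : v ∈ gradB A 𝒜 (1 + 1) := by
    have := sub_mem h2 hw
    simpa using this
  exact hv0 (gradB_disjoint A hgr hv this)

lemma bot_prop (hgr : IsNaturalGrading A 𝒜) {i : ℕ} (hi : 1 ≤ i) (h : 𝒜 i = ⊥) :
    ∀ j, i ≤ j → 𝒜 j = ⊥ := by
  have key : ∀ r, 𝒜 (i + r) = ⊥ := by
    intro r
    induction r with
    | zero => exact h
    | succ m ih =>
      have : i + (m + 1) = (i + m) + 1 := by omega
      rw [this, hgr.succ (i + m) (by omega), ih, pmul_bot_right]
  intro j hj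
  have : j = i + (j - i) := by omega
  rw [this]
  exact key _

lemma gradB_bot (hgr : IsNaturalGrading A 𝒜) {i : ℕ} (hi : 1 ≤ i) (h : 𝒜 i = ⊥) :
    gradB A 𝒜 i = ⊥ := by
  refine le_bot_iff.mp (iSup_le fun t => ?_)
  rw [bot_prop A hgr hi h t.1 t.2]

end Grading


/-! ### Left multiplication operators -/

lemma mulLeft_add' (u v : A) :
    LinearMap.mulLeft ℂ (u + v) = LinearMap.mulLeft ℂ u + LinearMap.mulLeft ℂ v := by
  ext z; simp [add_mul]

lemma mulLeft_smul' (c : ℂ) (u : A) :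
    LinearMap.mulLeft ℂ (c • u) = c • LinearMap.mulLeft ℂ u := by
  ext z; simp [smul_mul_assoc]

/-! ### One-variable polynomial genericity -/

lemma finite_zero_set [FiniteDimensional ℂ A] {N : ℕ} (w : ℕ → A) (c₀ : ℂ)
    (h : (∑ j ∈ Finset.range N, c₀ ^ j • w j) ≠ 0) :
    {c : ℂ | (∑ j ∈ Finset.range N, c ^ j • w j) = 0}.Finite := by
  classical
  set b := Module.Basis.ofVectorSpace ℂ A with hb
  have hrepr : b.repr (∑ j ∈ Finset.range N, c₀ ^ j • w j) ≠ 0 :=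
    b.repr.map_ne_zero_iff.mpr h
  obtain ⟨i, hi⟩ := Finsupp.ne_iff.mp hrepr
  simp only [Finsupp.coe_zero, Pi.zero_apply] at hi
  set P : Polynomial ℂ := ∑ j ∈ Finset.range N, Polynomial.C (b.repr (w j) i) * Polynomial.X ^ j
    with hP
  have heval : ∀ c : ℂ, P.eval c = b.repr (∑ j ∈ Finset.range N, c ^ j • w j) i := by
    intro c
    rw [hP]
    rw [Polynomial.eval_finset_sum, map_sum, Finsupp.finset_sum_apply]
    refine Finset.sum_congr rfl fun j _ => ?_
    rw [Polynomial.eval_mul, Polynomial.eval_C, Polynomial.eval_pow, Polynomial.eval_X,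
      map_smul, Finsupp.smul_apply, smul_eq_mul, mul_comm]
  have hP0 : P ≠ 0 := by
    intro h0
    apply hi
    rw [← heval c₀, h0, Polynomial.eval_zero]
  refine Set.Finite.subset (Polynomial.finite_setOf_isRoot hP0) ?_
  intro c hc
  simp only [Set.mem_setOf_eq] at hc ⊢
  show P.IsRoot c
  rw [Polynomial.IsRoot.def, heval, hc, map_zero]
  rfl

lemma pow_expand (F G : A →ₗ[ℂ] A) (z : A) (m : ℕ) :
    ∃ w : ℕ → A, w 0 = (F ^ m) z ∧ (∀ j, m + 1 ≤ j → w j = 0) ∧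
      ∀ c : ℂ, ((F + c • G) ^ m) z = ∑ j ∈ Finset.range (m + 1), c ^ j • w j := by
  induction m with
  | zero =>
    refine ⟨fun j => if j = 0 then z else 0, by simp, ?_, ?_⟩
    · intro j hj
      have : j ≠ 0 := by omega
      simp [this]
    · intro c
      simp
  | succ m ih =>
    obtain ⟨w, hw0, hwz, hw⟩ := ih
    refine ⟨fun j => F (w j) + (if j = 0 then 0 else G (w (j - 1))), ?_, ?_, ?_⟩
    · show F (w 0) + _ = _
      rw [if_pos rfl, add_zero, hw0, pow_succ' F m, Module.End.mul_apply]
    · intro j hj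
      have h1 : j ≠ 0 := by omega
      have h2 : w j = 0 := hwz j (by omega)
      have h3 : w (j - 1) = 0 := hwz (j - 1) (by omega)
      simp [h1, h2, h3]
    · intro c
      have hstep : ((F + c • G) ^ (m + 1)) z = (F + c • G) (((F + c • G) ^ m) z) := by
        rw [pow_succ' (F + c • G) m, Module.End.mul_apply]
      rw [hstep, hw c, LinearMap.add_apply, LinearMap.smul_apply, map_sum, map_sum]
      have e1 : (∑ j ∈ Finset.range (m + 1), F (c ^ j • w j))
          = ∑ j ∈ Finset.range (m + 2), c ^ j • F (w j) := by
        rw [Finset.sum_range_succ (fun j => c ^ j • F (w j)) (m + 1)]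
        rw [hwz (m + 1) le_rfl, map_zero, smul_zero, add_zero]
        exact Finset.sum_congr rfl fun j _ => by rw [map_smul]
      have e2 : (c • ∑ j ∈ Finset.range (m + 1), G (c ^ j • w j))
          = ∑ j ∈ Finset.range (m + 2), c ^ j •
              (if j = 0 then (0 : A) else G (w (j - 1))) := by
        have h1 : ∀ j : ℕ, c ^ (j + 1) • (if j + 1 = 0 then (0 : A) else G (w (j + 1 - 1)))
            = c • (c ^ j • G (w j)) := by
          intro j
          rw [if_neg (Nat.succ_ne_zero j), Nat.add_sub_cancel, pow_succ', mul_smul]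
        calc c • ∑ j ∈ Finset.range (m + 1), G (c ^ j • w j)
            = ∑ j ∈ Finset.range (m + 1), c • (c ^ j • G (w j)) := by
              rw [Finset.smul_sum]
              exact Finset.sum_congr rfl fun j _ => by rw [map_smul]
          _ = ∑ j ∈ Finset.range (m + 2), c ^ j •
              (if j = 0 then (0 : A) else G (w (j - 1))) := by
              rw [Finset.sum_range_succ' (fun j => c ^ j •
                (if j = 0 then (0 : A) else G (w (j - 1)))) (m + 1)]
              simp [h1]
              exact Finset.sum_congr rfl fun j _ => by rw [pow_succ', mul_smul]
      rw [e1, e2, ← Finset.sum_add_distrib]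
      exact Finset.sum_congr rfl fun j _ => by rw [smul_add]

/-! ### finrank of independent sups -/

lemma finrank_iSup_finset [FiniteDimensional ℂ A] {𝒜 : ℕ → Submodule ℂ A}
    (hind : iSupIndep 𝒜) (s : Finset ℕ) :
    Module.finrank ℂ ↥(⨆ i ∈ s, 𝒜 i) = ∑ i ∈ s, Module.finrank ℂ (𝒜 i) := by
  classical
  induction s using Finset.induction_on with
  | empty => simp
  | @insert a s ha ih =>
    have hsup : (⨆ i ∈ insert a s, 𝒜 i) = 𝒜 a ⊔ ⨆ i ∈ s, 𝒜 i :=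
      Finset.iSup_insert a s 𝒜
    have hdisj : Disjoint (𝒜 a) (⨆ i ∈ s, 𝒜 i) := by
      refine (hind a).mono_right ?_
      refine iSup₂_le fun i hi => ?_
      exact le_iSup₂ (f := fun (j : ℕ) (_ : j ≠ a) => 𝒜 j) i (by rintro rfl; exact ha hi)
    have hadd := Submodule.finrank_sup_add_finrank_inf_eq (𝒜 a) (⨆ i ∈ s, 𝒜 i)
    rw [disjoint_iff.mp hdisj] at hadd
    rw [finrank_bot ℂ A] at hadd
    rw [hsup, Finset.sum_insert ha, ← ih]
    omega

/-! ### Rebracketing: `𝒜 (i+1) = 𝒜 i · 𝒜 1` -/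

lemma rebracket {𝒜 : ℕ → Submodule ℂ A} (hgr : IsNaturalGrading A 𝒜) :
    ∀ i, 1 ≤ i → 𝒜 (i + 1) = pmul A (𝒜 i) (𝒜 1) := by
  intro i hi
  induction i with
  | zero => omega
  | succ m ih =>
    rcases Nat.eq_zero_or_pos m with rfl | hm
    · exact hgr.succ 1 le_rfl
    · calc 𝒜 (m + 1 + 1) = pmul A (𝒜 1) (𝒜 (m + 1)) := hgr.succ (m + 1) (by omega)
        _ = pmul A (𝒜 1) (pmul A (𝒜 m) (𝒜 1)) := by rw [ih hm]
        _ = pmul A (pmul A (𝒜 1) (𝒜 m)) (𝒜 1) := (pmul_assoc A _ _ _).symm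
        _ = pmul A (𝒜 (m + 1)) (𝒜 1) := by rw [← hgr.succ m hm]


lemma sum_pow_zero (N : ℕ) (w : ℕ → A) :
    (∑ j ∈ Finset.range (N + 1), (0 : ℂ) ^ j • w j) = w 0 := by
  rw [Finset.sum_range_succ' (fun j => (0 : ℂ) ^ j • w j) N]
  simp

lemma finite_zero_affine {u₀ u₁ : A} (h : u₀ ≠ 0 ∨ u₁ ≠ 0) :
    {c : ℂ | u₀ + c • u₁ = 0}.Finite := by
  rcases eq_or_ne u₁ 0 with rfl | h1
  · rcases h with h0 | h0
    · convert Set.finite_empty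
      ext c
      simp [h0]
    · exact absurd rfl h0
  · apply Set.Subsingleton.finite
    intro c1 hc1 c2 hc2
    simp only [Set.mem_setOf_eq] at hc1 hc2
    have hss : (c1 - c2) • u₁ = 0 := by
      have : c1 • u₁ = c2 • u₁ := by
        have e1 : c1 • u₁ = -u₀ := by linear_combination (norm := module) hc1
        have e2 : c2 • u₁ = -u₀ := by linear_combination (norm := module) hc2
        rw [e1, e2]
      rw [sub_smul, this, sub_self]
    rcases smul_eq_zero.mp hss with h0 | h0
    · exact sub_eq_zero.mp h0
    · exact absurd h0 h1

section Main2

variable {𝒜 : ℕ → Submodule ℂ A}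

lemma Lpow_gradB (hgr : IsNaturalGrading A 𝒜) (y z : A) {i : ℕ} (m : ℕ) (hi : 1 ≤ i)
    (hz : z ∈ gradB A 𝒜 i) :
    ((LinearMap.mulLeft ℂ y) ^ m) z ∈ gradB A 𝒜 (i + m) := by
  induction m with
  | zero => simpa using hz
  | succ r ih =>
    have hstep : ((LinearMap.mulLeft ℂ y) ^ (r + 1)) z
        = y * (((LinearMap.mulLeft ℂ y) ^ r) z) := by
      rw [pow_succ' (LinearMap.mulLeft ℂ y) r, Module.End.mul_apply, LinearMap.mulLeft_apply]
    rw [hstep]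
    have hmul := gradB_mul A hgr (le_refl 1) (hi.trans (Nat.le_add_right i r)) y
      (mem_gradB_one A hgr y) _ ih
    have he : 1 + (i + r) = i + (r + 1) := by omega
    rwa [he] at hmul

lemma nonbot_of_chain (hgr : IsNaturalGrading A 𝒜) {x : A} {d : ℕ}
    (hx : (LinearMap.mulLeft ℂ x) ^ (d - 1) ≠ 0) :
    ∀ t, 1 ≤ t → t ≤ d → 𝒜 t ≠ ⊥ := by
  intro t ht1 ht2 hbot
  apply hx
  apply LinearMap.ext
  intro z
  have h1 : ((LinearMap.mulLeft ℂ x) ^ (t - 1)) z ∈ gradB A 𝒜 (1 + (t - 1)) :=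
    Lpow_gradB A hgr x z (t - 1) le_rfl (mem_gradB_one A hgr z)
  have he : 1 + (t - 1) = t := by omega
  rw [he, gradB_bot A hgr ht1 hbot, Submodule.mem_bot] at h1
  have he2 : d - 1 = (d - t) + (t - 1) := by omega
  rw [he2, pow_add, Module.End.mul_apply, h1, map_zero]
  simp

lemma rank_ge (hgr : IsNaturalGrading A 𝒜) [FiniteDimensional ℂ A] {d : ℕ} {v x' : A}
    (hv : v ∈ 𝒜 1) (hx' : x' ∈ gradB A 𝒜 2) (b : ℕ → A)
    (hb : ∀ t, 1 ≤ t → t ≤ d → b t ∈ 𝒜 t)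
    (hvb : ∀ t, 1 ≤ t → t ≤ d → v * b t ≠ 0) :
    d ≤ Module.finrank ℂ (LinearMap.range (LinearMap.mulLeft ℂ (v + x'))) := by
  classical
  set y := v + x' with hy
  set W : Fin d → A := fun i => y * b (i.1 + 1) with hW
  have hWmem : ∀ i, W i ∈ LinearMap.range (LinearMap.mulLeft ℂ y) := fun i => ⟨b (i.1 + 1), rfl⟩
  have hind : LinearIndependent ℂ W := by
    rw [linearIndependent_iff']
    intro s g hsum i hi
    by_contra hgi
    have hTne : (s.filter fun j => g j ≠ 0).Nonempty :=
      ⟨i, Finset.mem_filter.mpr ⟨hi, hgi⟩⟩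
    set T := s.filter fun j => g j ≠ 0 with hT
    set t₀ := T.min' hTne with ht₀
    have ht₀T : t₀ ∈ T := T.min'_mem hTne
    have ht₀s : t₀ ∈ s := (Finset.mem_filter.mp ht₀T).1
    have hgt₀ : g t₀ ≠ 0 := (Finset.mem_filter.mp ht₀T).2
    set u := v * b (t₀.1 + 1) with hu
    have hu0 : u ≠ 0 := hvb _ (by omega) t₀.2
    have humem : u ∈ 𝒜 (t₀.1 + 2) := by
      have hm := hgr.mul_le 1 (t₀.1 + 1) le_rfl (by omega)
        (mul_mem_pmul A hv (hb _ (by omega) t₀.2))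
      have he : 1 + (t₀.1 + 1) = t₀.1 + 2 := by omega
      rwa [he] at hm
    have hWt₀ : W t₀ = u + x' * b (t₀.1 + 1) := by
      rw [hW, hu, hy]
      exact add_mul v x' (b (t₀.1 + 1))
    have hsum' : g t₀ • u = -(∑ j ∈ s.erase t₀, g j • W j) - g t₀ • (x' * b (t₀.1 + 1)) := by
      have h1 : g t₀ • W t₀ + ∑ j ∈ s.erase t₀, g j • W j = 0 := by
        rw [Finset.add_sum_erase s (fun j => g j • W j) ht₀s]
        exact hsum
      rw [hWt₀] at h1
      linear_combination (norm := module) h1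
    have hbmem : b (t₀.1 + 1) ∈ gradB A 𝒜 (t₀.1 + 1) :=
      le_gradB A 𝒜 le_rfl (hb _ (by omega) t₀.2)
    have hmem3 : g t₀ • u ∈ gradB A 𝒜 (t₀.1 + 3) := by
      rw [hsum']
      refine sub_mem (neg_mem (Submodule.sum_mem _ ?_)) ?_
      · intro j hj
        rcases eq_or_ne (g j) 0 with h0 | h0
        · rw [h0, zero_smul]
          exact zero_mem _
        · have hjT : j ∈ T := Finset.mem_filter.mpr ⟨Finset.mem_of_mem_erase hj, h0⟩
          have hlt : t₀ < j := lt_of_le_of_ne (T.min'_le j hjT)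
            (Ne.symm (Finset.ne_of_mem_erase hj))
          have hbj : b (j.1 + 1) ∈ gradB A 𝒜 (j.1 + 1) :=
            le_gradB A 𝒜 le_rfl (hb _ (by omega) j.2)
          have hWj := gradB_mul A hgr (le_refl 1) (by omega : 1 ≤ j.1 + 1) y
            (mem_gradB_one A hgr y) _ hbj
          have he : 1 + (j.1 + 1) = j.1 + 2 := by omega
          rw [he] at hWj
          have hle : gradB A 𝒜 (j.1 + 2) ≤ gradB A 𝒜 (t₀.1 + 3) := by
            apply gradB_le_gradB
            have : t₀.1 < j.1 := hlt
            omega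
          exact Submodule.smul_mem _ _ (hle hWj)
      · refine Submodule.smul_mem _ _ ?_
        have hm := gradB_mul A hgr (by omega : 1 ≤ 2) (by omega : 1 ≤ t₀.1 + 1) x' hx' _ hbmem
        have he : 2 + (t₀.1 + 1) = t₀.1 + 3 := by omega
        rwa [he] at hm
    have humem3 : u ∈ gradB A 𝒜 (t₀.1 + 3) := by
      have hs := Submodule.smul_mem (gradB A 𝒜 (t₀.1 + 3)) (g t₀)⁻¹ hmem3
      rwa [inv_smul_smul₀ hgt₀] at hs
    exact hu0 (gradB_disjoint A hgr humem humem3)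
  have hind' : LinearIndependent ℂ (fun i : Fin d =>
      (⟨W i, hWmem i⟩ : LinearMap.range (LinearMap.mulLeft ℂ y))) := by
    apply LinearIndependent.of_comp (LinearMap.range (LinearMap.mulLeft ℂ y)).subtype
    exact hind
  simpa using hind'.fintype_card_le_finrank

end Main2


section Main3

variable {𝒜 : ℕ → Submodule ℂ A}

lemma exists_generic (hgr : IsNaturalGrading A 𝒜) [FiniteDimensional ℂ A] {d : ℕ}
    {x₁ x' z₀ : A} (hx₁ : x₁ ∈ 𝒜 1)
    (hL : ((LinearMap.mulLeft ℂ (x₁ + x')) ^ (d - 1)) z₀ ≠ 0)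
    (a b : ℕ → A) (ha : ∀ t, 1 ≤ t → t ≤ d → a t ∈ 𝒜 1)
    (hab : ∀ t, 1 ≤ t → t ≤ d → a t * b t ≠ 0) :
    ∃ v ∈ 𝒜 1, ((LinearMap.mulLeft ℂ (v + x')) ^ (d - 1)) z₀ ≠ 0 ∧
      ∀ t, 1 ≤ t → t ≤ d → v * b t ≠ 0 := by
  classical
  suffices h : ∀ r, ∃ v ∈ 𝒜 1, ((LinearMap.mulLeft ℂ (v + x')) ^ (d - 1)) z₀ ≠ 0 ∧
      ∀ t, 1 ≤ t → t ≤ r → t ≤ d → v * b t ≠ 0 by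
    obtain ⟨v, h1, h2, h3⟩ := h d
    exact ⟨v, h1, h2, fun t ht1 ht2 => h3 t ht1 ht2 ht2⟩
  intro r
  induction r with
  | zero => exact ⟨x₁, hx₁, hL, fun t ht1 ht2 _ => by omega⟩
  | succ r ih =>
    obtain ⟨v, hv, hLv, hvb⟩ := ih
    rcases Nat.lt_or_ge d (r + 1) with hrd | hrd
    · exact ⟨v, hv, hLv, fun t ht1 ht2 ht3 => hvb t ht1 (by omega) ht3⟩
    · obtain ⟨w, hw0, hwz, hwsum⟩ := pow_expand A (LinearMap.mulLeft ℂ (v + x'))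
        (LinearMap.mulLeft ℂ (a (r + 1))) z₀ (d - 1)
      have hkey : ∀ c : ℂ, ((LinearMap.mulLeft ℂ ((v + c • a (r + 1)) + x')) ^ (d - 1)) z₀
          = ∑ j ∈ Finset.range (d - 1 + 1), c ^ j • w j := by
        intro c
        rw [← hwsum c]
        have he : (v + c • a (r + 1)) + x' = (v + x') + c • a (r + 1) := by
          abel
        rw [he, mulLeft_add', mulLeft_smul']
      have hw0ne : (∑ j ∈ Finset.range (d - 1 + 1), (0 : ℂ) ^ j • w j) ≠ 0 := by
        rw [sum_pow_zero A (d - 1) w, hw0]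
        exact hLv
      have hZ0 : {c : ℂ | (∑ j ∈ Finset.range (d - 1 + 1), c ^ j • w j) = 0}.Finite :=
        finite_zero_set A w 0 hw0ne
      have hZs : ∀ s ∈ Finset.Icc 1 (min r d),
          {c : ℂ | v * b s + c • (a (r + 1) * b s) = 0}.Finite := by
        intro s hs
        rw [Finset.mem_Icc] at hs
        exact finite_zero_affine A (Or.inl (hvb s hs.1 (le_trans hs.2 (min_le_left r d))
          (le_trans hs.2 (min_le_right r d))))
      have hZr : {c : ℂ | v * b (r + 1) + c • (a (r + 1) * b (r + 1)) = 0}.Finite :=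
        finite_zero_affine A (Or.inr (hab (r + 1) (by omega) hrd))
      have hbad : ({c : ℂ | (∑ j ∈ Finset.range (d - 1 + 1), c ^ j • w j) = 0} ∪
          ((⋃ s ∈ (Finset.Icc 1 (min r d) : Finset ℕ),
            {c : ℂ | v * b s + c • (a (r + 1) * b s) = 0}) ∪
          {c : ℂ | v * b (r + 1) + c • (a (r + 1) * b (r + 1)) = 0})).Finite := by
        refine Set.Finite.union hZ0 (Set.Finite.union ?_ hZr)
        exact Set.Finite.biUnion (Finset.Icc 1 (min r d)).finite_toSet hZs
      obtain ⟨c, hc⟩ := hbad.infinite_compl.nonempty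
      simp only [Set.mem_compl_iff, Set.mem_union, Set.mem_iUnion, not_or, not_exists] at hc
      obtain ⟨hc0, hcs, hcr⟩ := hc
      refine ⟨v + c • a (r + 1), add_mem hv (Submodule.smul_mem _ _ (ha (r + 1) (by omega) hrd)),
        ?_, ?_⟩
      · rw [hkey c]
        exact hc0
      · intro t ht1 ht2 ht3
        have hprod : (v + c • a (r + 1)) * b t = v * b t + c • (a (r + 1) * b t) := by
          rw [add_mul, smul_mul_assoc]
        rcases Nat.lt_or_ge t (r + 1) with htr | htr
        · have hts : t ∈ Finset.Icc 1 (min r d) := by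
            rw [Finset.mem_Icc]
            omega
          have := hcs t hts
          rw [hprod]
          exact this
        · have hteq : t = r + 1 := by omega
          rw [hprod, hteq]
          exact hcr
  
lemma top_component_bot (hgr : IsNaturalGrading A 𝒜) [FiniteDimensional ℂ A] {n p : ℕ}
    (hpf : IsPFiliform A n p) (hnp : 3 ≤ n - p) : 𝒜 (n - p + 1) = ⊥ := by
  classical
  by_contra hbot
  obtain ⟨x, hxsq, hxL, hxrank⟩ := hpf.1
  obtain ⟨x₁, hx₁, x', hx', hxe⟩ := exists_decomp A hgr x
  have hwit : ∀ t, ∃ aa bb : A, 1 ≤ t → t ≤ n - p →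
      aa ∈ 𝒜 1 ∧ bb ∈ 𝒜 t ∧ aa * bb ≠ 0 := by
    intro t
    by_cases ht : 1 ≤ t ∧ t ≤ n - p
    · have hne : pmul A (𝒜 1) (𝒜 t) ≠ ⊥ := by
        rw [← hgr.succ t ht.1]
        rcases Nat.lt_or_ge (t + 1) (n - p + 1) with h | h
        · exact nonbot_of_chain A hgr hxL (t + 1) (by omega) (by omega)
        · have : t + 1 = n - p + 1 := by omega
          rw [this]
          exact hbot
      obtain ⟨aa, haa, bb, hbb, hab⟩ := pmul_ne_bot A hne
      exact ⟨aa, bb, fun _ _ => ⟨haa, hbb, hab⟩⟩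
    · exact ⟨0, 0, fun h1 h2 => absurd ⟨h1, h2⟩ ht⟩
  choose aa bb hwit using hwit
  have hz : ∃ z₀, ((LinearMap.mulLeft ℂ x) ^ (n - p - 1)) z₀ ≠ 0 := by
    by_contra hc
    push_neg at hc
    exact hxL (LinearMap.ext fun z => by simpa using hc z)
  obtain ⟨z₀, hz₀⟩ := hz
  have hL0 : ((LinearMap.mulLeft ℂ (x₁ + x')) ^ (n - p - 1)) z₀ ≠ 0 := by
    rw [hxe]
    exact hz₀
  obtain ⟨v, hv, hLv, hvb⟩ := exists_generic A hgr hx₁ hL0 aa bb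
    (fun t h1 h2 => (hwit t h1 h2).1)
    (fun t h1 h2 => (hwit t h1 h2).2.2)
  have hv0 : v ≠ 0 := by
    intro h0
    exact hvb 1 le_rfl (by omega) (by rw [h0, zero_mul])
  have hy : v + x' ∉ pmul A ⊤ ⊤ := not_mem_sq A hgr hv hv0 hx'
  have hrank := (hpf.2 (v + x') hy).2 (by
    intro h0
    apply hLv
    rw [h0]
    simp)
  have hge := rank_ge A hgr hv hx' bb (fun t h1 h2 => (hwit t h1 h2).2.1) hvb
  rw [hrank] at hge
  omega

end Main3

/-- for an `n`-dimensional naturally graded `p`-filiform complex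
associative algebra with natural grading `(𝒜_i)`, if for some `1 ≤ k ≤ n−p−1` one has
`s_1 + ⋯ + s_k < p` (equivalently `dim 𝒜_1 + ⋯ + dim 𝒜_k < k + p`), then
`s_{k+1} ≠ 0`, i.e. `dim 𝒜_{k+1} ≥ 2`. -/
theorem next_component_nontrivial (n p : ℕ) (hp : 1 ≤ p) (hnp : 3 ≤ n - p)
    [FiniteDimensional ℂ A] (hdim : Module.finrank ℂ A = n)
    (hnil : IsNilpotentAlg A)
    (𝒜 : ℕ → Submodule ℂ A) (hgr : IsNaturalGrading A 𝒜)
    (hpf : IsPFiliform A n p)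
    (k : ℕ) (hk1 : 1 ≤ k) (hk2 : k ≤ n - p - 1)
    (hsum : (∑ i ∈ Finset.Icc 1 k, Module.finrank ℂ (𝒜 i)) < k + p) :
    2 ≤ Module.finrank ℂ (𝒜 (k + 1)) := by
  classical
  obtain ⟨x, hxsq, hxL, hxrank⟩ := hpf.1
  have hd3 : 3 ≤ n - p := hnp
  have hnonbot : ∀ t, 1 ≤ t → t ≤ n - p → 𝒜 t ≠ ⊥ := nonbot_of_chain A hgr hxL
  have htopbot : 𝒜 (n - p + 1) = ⊥ := top_component_bot A hgr hpf hnp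
  have hbotall : ∀ j, n - p + 1 ≤ j → 𝒜 j = ⊥ := bot_prop A hgr (by omega) htopbot
  have hsupIcc : (⨆ i ∈ Finset.Icc 1 (n - p), 𝒜 i) = ⊤ := by
    apply le_antisymm le_top
    rw [← hgr.internal.submodule_iSup_eq_top]
    refine iSup_le fun t => ?_
    rcases Nat.eq_zero_or_pos t with rfl | ht1
    · rw [hgr.zero]
      exact bot_le
    rcases Nat.lt_or_ge (n - p) t with h2 | h2
    · rw [hbotall t (by omega)]
      exact bot_le
    · exact le_biSup 𝒜 (Finset.mem_Icc.mpr ⟨ht1, h2⟩)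
  have hfull : (∑ i ∈ Finset.Icc 1 (n - p), Module.finrank ℂ (𝒜 i)) = n := by
    rw [← finrank_iSup_finset A hgr.internal.submodule_iSupIndep (Finset.Icc 1 (n - p)),
      hsupIcc, finrank_top, hdim]
  have hpos : ∀ t, 1 ≤ t → t ≤ n - p → 1 ≤ Module.finrank ℂ (𝒜 t) := by
    intro t h1 h2
    haveI : Nontrivial (𝒜 t) := Submodule.nontrivial_iff_ne_bot.mpr (hnonbot t h1 h2)
    exact Module.finrank_pos
  by_contra hcon
  push_neg at hcon
  have hk1dim : Module.finrank ℂ (𝒜 (k + 1)) = 1 := by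
    have := hpos (k + 1) (by omega) (by omega)
    omega
  -- find the minimal index `m` with a large component
  set S := (Finset.Icc (k + 2) (n - p)).filter
    (fun t => 2 ≤ Module.finrank ℂ (𝒜 t)) with hS
  have hSne : S.Nonempty := by
    by_contra hSe
    rw [Finset.not_nonempty_iff_eq_empty] at hSe
    have hsmall : ∀ t ∈ Finset.Ioc (k + 1) (n - p), Module.finrank ℂ (𝒜 t) ≤ 1 := by
      intro t ht
      rw [Finset.mem_Ioc] at ht
      by_contra h2
      have hts : t ∈ S := Finset.mem_filter.mpr ⟨Finset.mem_Icc.mpr ⟨by omega, ht.2⟩, by omega⟩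
      rw [hSe] at hts
      exact absurd hts (Finset.notMem_empty t)
    have hb1 : (∑ i ∈ Finset.Ioc (k + 1) (n - p), Module.finrank ℂ (𝒜 i))
        ≤ (n - p) - (k + 1) := by
      have := Finset.sum_le_card_nsmul (Finset.Ioc (k + 1) (n - p))
        (fun t => Module.finrank ℂ (𝒜 t)) 1 hsmall
      simpa [Nat.card_Ioc] using this
    have hsplit1 : (∑ i ∈ Finset.Ioc 0 k, Module.finrank ℂ (𝒜 i))
        + (∑ i ∈ Finset.Ioc k (n - p), Module.finrank ℂ (𝒜 i))
        = ∑ i ∈ Finset.Ioc 0 (n - p), Module.finrank ℂ (𝒜 i) :=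
      Finset.sum_Ioc_consecutive _ (by omega) (by omega)
    have hsplit2 : (∑ i ∈ Finset.Ioc k (k + 1), Module.finrank ℂ (𝒜 i))
        + (∑ i ∈ Finset.Ioc (k + 1) (n - p), Module.finrank ℂ (𝒜 i))
        = ∑ i ∈ Finset.Ioc k (n - p), Module.finrank ℂ (𝒜 i) :=
      Finset.sum_Ioc_consecutive _ (by omega) (by omega)
    have hsingle : (∑ i ∈ Finset.Ioc k (k + 1), Module.finrank ℂ (𝒜 i))
        = Module.finrank ℂ (𝒜 (k + 1)) := by
      rw [← Finset.Icc_add_one_left_eq_Ioc, Finset.Icc_self, Finset.sum_singleton]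
    have hIcc0 : Finset.Icc 1 (n - p) = Finset.Ioc 0 (n - p) := Finset.Icc_add_one_left_eq_Ioc _ _
    have hIcck : Finset.Icc 1 k = Finset.Ioc 0 k := Finset.Icc_add_one_left_eq_Ioc _ _
    rw [hIcc0] at hfull
    rw [hIcck] at hsum
    omega
  set m := S.min' hSne with hm
  have hmS : m ∈ S := S.min'_mem hSne
  have hmIcc := (Finset.mem_filter.mp hmS).1
  have hm2dim : 2 ≤ Module.finrank ℂ (𝒜 m) := (Finset.mem_filter.mp hmS).2
  rw [Finset.mem_Icc] at hmIcc
  obtain ⟨M, hM, hMk⟩ : ∃ M : ℕ, m = M + 2 ∧ k ≤ M := ⟨m - 2, by omega, by omega⟩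
  have hM1 : 1 ≤ M := by omega
  -- the component below `m` is one-dimensional
  have h1dim : Module.finrank ℂ (𝒜 (M + 1)) = 1 := by
    rcases eq_or_ne M k with rfl | hne
    · exact hk1dim
    · have hrange : M + 1 ∈ Finset.Icc (k + 2) (n - p) := Finset.mem_Icc.mpr ⟨by omega, by omega⟩
      have hnotS : M + 1 ∉ S := by
        intro hin
        have := S.min'_le (M + 1) hin
        omega
      have hle1 : Module.finrank ℂ (𝒜 (M + 1)) ≤ 1 := by
        by_contra h2
        exact hnotS (Finset.mem_filter.mpr ⟨hrange, by omega⟩)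
      have := hpos (M + 1) (by omega) (by omega)
      omega
  obtain ⟨u, hu, hu0⟩ := (Submodule.ne_bot_iff _).mp (hnonbot (M + 1) (by omega) (by omega))
  have hspan : 𝒜 (M + 1) = Submodule.span ℂ {u} := by
    refine (Submodule.eq_of_le_of_finrank_le ?_ ?_).symm
    · rw [Submodule.span_le, Set.singleton_subset_iff]
      exact hu
    · rw [h1dim, finrank_span_singleton hu0]
  rw [hM] at hm2dim
  by_cases hWZ : ∀ ww ∈ 𝒜 M, ∀ z ∈ 𝒜 1, ww * z = 0
  · -- then `𝒜 (M+2) = 𝒜 (M+1) · 𝒜 1 = (𝒜 1 · 𝒜 M) · 𝒜 1 = 0`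
    have hbot2 : 𝒜 (M + 2) = ⊥ := by
      have h1 : 𝒜 (M + 1 + 1) = pmul A (𝒜 (M + 1)) (𝒜 1) := rebracket A hgr (M + 1) (by omega)
      have h2 : 𝒜 (M + 1) = pmul A (𝒜 1) (𝒜 M) := hgr.succ M hM1
      have : 𝒜 (M + 1 + 1) ≤ ⊥ := by
        rw [h1, h2, pmul_le]
        intro q hq z hz
        rw [Submodule.mem_bot]
        induction hq using Submodule.span_induction with
        | mem w hw =>
          obtain ⟨xx, hxx, ww, hww, rfl⟩ := hw
          rw [mul_assoc, hWZ ww hww z hz, mul_zero]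
        | zero => rw [zero_mul]
        | add a b _ _ ha hb => rw [add_mul, ha, hb, add_zero]
        | smul c a _ ha => rw [smul_mul_assoc, ha, smul_zero]
      exact le_bot_iff.mp this
    rw [hbot2] at hm2dim
    rw [finrank_bot ℂ A] at hm2dim
    omega
  · push_neg at hWZ
    obtain ⟨w₀, hw₀, z₀, hz₀, hwz₀⟩ := hWZ
    have hwzmem : w₀ * z₀ ∈ 𝒜 (M + 1) :=
      hgr.mul_le M 1 hM1 le_rfl (mul_mem_pmul A hw₀ hz₀)
    rw [hspan] at hwzmem
    obtain ⟨γ, hγ⟩ := Submodule.mem_span_singleton.mp hwzmem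
    have hγ0 : γ ≠ 0 := by
      rintro rfl
      rw [zero_smul] at hγ
      exact hwz₀ hγ.symm
    have hxu : ∀ x ∈ 𝒜 1, x * u ∈ Submodule.span ℂ {u * z₀} := by
      intro x hx
      have hxw : x * w₀ ∈ 𝒜 (M + 1) := by
        have := hgr.mul_le 1 M le_rfl hM1 (mul_mem_pmul A hx hw₀)
        have he : 1 + M = M + 1 := by omega
        rwa [he] at this
      rw [hspan] at hxw
      obtain ⟨β, hβ⟩ := Submodule.mem_span_singleton.mp hxw
      have hassoc : (x * w₀) * z₀ = x * (w₀ * z₀) := mul_assoc x w₀ z₀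
      rw [← hβ, ← hγ, smul_mul_assoc, mul_smul_comm] at hassoc
      have heq : x * u = γ⁻¹ • (β • (u * z₀)) := by
        have := congrArg (fun t => γ⁻¹ • t) hassoc
        simp only [inv_smul_smul₀ hγ0] at this
        exact this.symm
      rw [heq]
      exact Submodule.smul_mem _ _ (Submodule.smul_mem _ _ (Submodule.mem_span_singleton_self _))
    have hle2 : 𝒜 (M + 2) ≤ Submodule.span ℂ {u * z₀} := by
      have hsucc : 𝒜 (M + 1 + 1) = pmul A (𝒜 1) (𝒜 (M + 1)) := hgr.succ (M + 1) (by omega)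
      rw [show M + 2 = M + 1 + 1 from rfl, hsucc, pmul_le]
      intro xx hxx ww hww
      rw [hspan] at hww
      obtain ⟨sc, hsc⟩ := Submodule.mem_span_singleton.mp hww
      rw [← hsc, mul_smul_comm]
      exact Submodule.smul_mem _ _ (hxu xx hxx)
    have hle1 : Module.finrank ℂ (𝒜 (M + 2)) ≤ 1 := by
      have h1' : Module.finrank ℂ (Submodule.span ℂ ({u * z₀} : Set A)) ≤ 1 := by
        rcases eq_or_ne (u * z₀) 0 with h0 | h0
        · rw [h0]
          rw [Submodule.span_zero_singleton, finrank_bot ℂ A]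
          omega
        · rw [finrank_span_singleton h0]
      exact le_trans (Submodule.finrank_mono hle2) h1'
    omega
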